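/- Uniform convergence of the piecewise-linear Euler interpolant: let p : [0, T] → ℝⁿ be a C² solution of ẋ = e(x) with p(0) = x₀ and Lipschitz constant L for e. Define the continuous approximation f_h : [0, T] → ℝⁿ by f_h((i+t)h) = x_i + (x_{i+1} − x_i)·t for integer i ≥ 0 and 0 ≤ t < 1, where x_{i+1} = x_i + h·e(x_i). Then for every ε > 0 there exists h₀ > 0 such that for all 0 < h < h₀ and all t ∈ [0, T], ‖p(t) − f_h(t)‖ < ε. -/

import Mathlib

open Set

/-- Euler iterates `x_{k+1} = x_k + h • e(x_k)` starting at `x₀`. -/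
noncomputable def euler {n : ℕ} (e : EuclideanSpace ℝ (Fin n) → EuclideanSpace ℝ (Fin n))
    (x0 : EuclideanSpace ℝ (Fin n)) (h : ℝ) : ℕ → EuclideanSpace ℝ (Fin n)
  | 0 => x0
  | k + 1 => euler e x0 h k + h • e (euler e x0 h k)

/-- The piecewise-linear interpolant of the Euler iterates:
`f_h((i + t)·h) = x_i + t • (x_{i+1} − x_i)` for integers `i ≥ 0` and
`0 ≤ t < 1`. -/
noncomputable def eulerInterp {n : ℕ}
    (e : EuclideanSpace ℝ (Fin n) → EuclideanSpace ℝ (Fin n))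
    (x0 : EuclideanSpace ℝ (Fin n)) (h : ℝ) (t : ℝ) : EuclideanSpace ℝ (Fin n) :=
  let i : ℕ := ⌊t / h⌋₊
  euler e x0 h i + ((t - (i : ℝ) * h) / h) • (euler e x0 h (i + 1) - euler e x0 h i)

section Aux

variable {n : ℕ} (e : EuclideanSpace ℝ (Fin n) → EuclideanSpace ℝ (Fin n))
    (x0 : EuclideanSpace ℝ (Fin n)) (h L : ℝ)

lemma floor_eq_of_mem' (hh : 0 < h) (i : ℕ) {s : ℝ} (h1 : (i:ℝ)*h ≤ s) (h2 : s < ((i:ℝ)+1)*h) :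
    ⌊s / h⌋₊ = i := by
  have h0 : (0:ℝ) ≤ s := le_trans (by positivity) h1
  rw [Nat.floor_eq_iff (div_nonneg h0 hh.le)]
  exact ⟨(le_div_iff₀ hh).2 h1, (div_lt_iff₀ hh).2 (by linarith)⟩

lemma eulerInterp_eq_affine (hh : 0 < h) (i : ℕ) {s : ℝ}
    (h1 : (i:ℝ)*h ≤ s) (h2 : s ≤ ((i:ℝ)+1)*h) :
    eulerInterp e x0 h s =
      euler e x0 h i + ((s - (i:ℝ)*h)/h) • (euler e x0 h (i+1) - euler e x0 h i) := by
  rcases lt_or_eq_of_le h2 with h2 | h2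
  · simp only [eulerInterp, floor_eq_of_mem' h hh i h1 h2]
  · have hfl : ⌊s / h⌋₊ = i + 1 := by
      rw [h2, mul_div_cancel_right₀ _ hh.ne']
      exact_mod_cast Nat.floor_natCast (i+1)
    simp only [eulerInterp, hfl]
    have hc2 : (s - (i:ℝ)*h)/h = 1 := by rw [h2]; field_simp; ring
    push_cast
    rw [hc2, one_smul]
    have hc : (s - ((i:ℝ) + 1) * h) / h = 0 := by rw [h2]; ring_nf
    rw [hc, zero_smul, add_zero]
    abel

lemma affine_continuous (i : ℕ) :
    Continuous (fun s : ℝ => euler e x0 h i +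
      ((s - (i:ℝ)*h)/h) • (euler e x0 h (i+1) - euler e x0 h i)) := by
  fun_prop

lemma hasDerivAt_affine (hh : 0 < h) (i : ℕ) (s : ℝ) :
    HasDerivAt (fun t => euler e x0 h i +
      ((t - (i:ℝ)*h)/h) • (euler e x0 h (i+1) - euler e x0 h i))
      (e (euler e x0 h i)) s := by
  have hv : euler e x0 h (i+1) - euler e x0 h i = h • e (euler e x0 h i) := by simp [euler]
  have hd : HasDerivAt (fun t : ℝ => (t - (i:ℝ)*h)/h) (1/h) s := by
    simpa using ((hasDerivAt_id s).sub_const ((i:ℝ)*h)).div_const h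
  have := (hd.smul_const (euler e x0 h (i+1) - euler e x0 h i)).const_add (euler e x0 h i)
  refine this.congr_deriv ?_
  rw [hv, smul_smul, one_div, inv_mul_cancel₀ hh.ne', one_smul]

lemma norm_e_euler_le (hh : 0 < h) (hL : 0 < L)
    (hLip : LipschitzWith (Real.toNNReal L) e) (k : ℕ) :
    ‖e (euler e x0 h k)‖ ≤ Real.exp (L * (k * h)) * ‖e x0‖ := by
  induction k with
  | zero => simp [euler]
  | succ k ih =>
    have hstep : ‖e (euler e x0 h (k+1)) - e (euler e x0 h k)‖
        ≤ L * (h * ‖e (euler e x0 h k)‖) := by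
      have := hLip.dist_le_mul (euler e x0 h (k+1)) (euler e x0 h k)
      rw [dist_eq_norm, dist_eq_norm, Real.coe_toNNReal _ hL.le] at this
      refine this.trans ?_
      have hv : euler e x0 h (k+1) - euler e x0 h k = h • e (euler e x0 h k) := by simp [euler]
      rw [hv, norm_smul, Real.norm_eq_abs, abs_of_pos hh]
    have h1 : ‖e (euler e x0 h (k+1))‖ ≤ (1 + L * h) * ‖e (euler e x0 h k)‖ := by
      calc ‖e (euler e x0 h (k+1))‖
          ≤ ‖e (euler e x0 h k)‖ + ‖e (euler e x0 h (k+1)) - e (euler e x0 h k)‖ := by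
            have := norm_add_le (e (euler e x0 h k))
              (e (euler e x0 h (k+1)) - e (euler e x0 h k))
            simpa using this
        _ ≤ ‖e (euler e x0 h k)‖ + L * (h * ‖e (euler e x0 h k)‖) := by linarith
        _ = (1 + L * h) * ‖e (euler e x0 h k)‖ := by ring
    have h2 : (1 + L * h) ≤ Real.exp (L * h) := by
      have := Real.add_one_le_exp (L * h); linarith
    calc ‖e (euler e x0 h (k+1))‖ ≤ (1 + L * h) * ‖e (euler e x0 h k)‖ := h1
      _ ≤ Real.exp (L*h) * (Real.exp (L * (k * h)) * ‖e x0‖) := by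
          apply mul_le_mul h2 ih (norm_nonneg _) (Real.exp_pos _).le
      _ = Real.exp (L * ((k:ℝ)+1) * h) * ‖e x0‖ := by
          rw [← mul_assoc, ← Real.exp_add]; ring_nf
      _ = Real.exp (L * (((k+1 : ℕ):ℝ) * h)) * ‖e x0‖ := by push_cast; ring_nf

lemma eulerInterp_continuous (hh : 0 < h) : Continuous (eulerInterp e x0 h) := by
  rw [continuous_iff_continuousAt]
  intro t
  by_cases ht : t < h
  · have heq : ∀ s ∈ Iio h, eulerInterp e x0 h s =
        euler e x0 h 0 + ((s - ((0:ℕ):ℝ)*h)/h) • (euler e x0 h (0+1) - euler e x0 h 0) := by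
      intro s hs
      by_cases h0 : 0 ≤ s
      · exact eulerInterp_eq_affine e x0 h hh 0 (by simpa using h0)
          (by push_cast; simpa using hs.le)
      · push_neg at h0
        have hfl : ⌊s / h⌋₊ = 0 := by
          rw [Nat.floor_eq_zero]
          exact lt_of_lt_of_le (div_neg_of_neg_of_pos h0 hh) zero_le_one
        simp only [eulerInterp, hfl]
    exact ((affine_continuous e x0 h 0).continuousAt).congr
      (Filter.eventuallyEq_of_mem (Iio_mem_nhds ht) heq).symm
  · push_neg at ht
    have ht0 : 0 < t := lt_of_lt_of_le hh ht
    set i : ℕ := ⌊t / h⌋₊ with hi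
    have hil : (i:ℝ)*h ≤ t := by
      rw [← le_div_iff₀ hh]; exact Nat.floor_le (div_nonneg ht0.le hh.le)
    have hir : t < ((i:ℝ)+1)*h := by
      rw [← div_lt_iff₀ hh]; exact_mod_cast Nat.lt_floor_add_one (t/h)
    have hright : ContinuousWithinAt (eulerInterp e x0 h) (Ici t) t := by
      refine ((affine_continuous e x0 h i).continuousAt.continuousWithinAt).congr_of_eventuallyEq
        ?_ (eulerInterp_eq_affine e x0 h hh i hil hir.le)
      filter_upwards [nhdsWithin_le_nhds (Iio_mem_nhds hir), self_mem_nhdsWithin] with s hs1 hs2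
      exact eulerInterp_eq_affine e x0 h hh i (le_trans hil hs2) (le_of_lt hs1)
    have hleft : ContinuousWithinAt (eulerInterp e x0 h) (Iic t) t := by
      set j : ℕ := ⌈t / h⌉₊ with hj
      have hj1 : 1 ≤ j := Nat.one_le_iff_ne_zero.2 (by
        simp only [hj, ne_eq, Nat.ceil_eq_zero, not_le]
        exact div_pos ht0 hh)
      set k : ℕ := j - 1 with hk
      have hkc : ((k:ℝ)+1) = (j:ℝ) := by
        rw [hk]; push_cast [Nat.cast_sub hj1]; ring
      have hkr : t ≤ ((k:ℝ)+1)*h := by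
        rw [hkc, ← div_le_iff₀ hh]; exact Nat.le_ceil (t/h)
      have hkl : (k:ℝ)*h < t := by
        rw [← lt_div_iff₀ hh]
        have h2 : (j:ℝ) < t/h + 1 := Nat.ceil_lt_add_one (div_nonneg ht0.le hh.le)
        have hkk : (k:ℝ) = (j:ℝ) - 1 := by rw [← hkc]; ring
        rw [hkk]; linarith
      refine ((affine_continuous e x0 h k).continuousAt.continuousWithinAt).congr_of_eventuallyEq
        ?_ (eulerInterp_eq_affine e x0 h hh k hkl.le hkr)
      filter_upwards [nhdsWithin_le_nhds (Ioi_mem_nhds hkl), self_mem_nhdsWithin] with s hs1 hs2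
      exact eulerInterp_eq_affine e x0 h hh k (le_of_lt hs1) (le_trans hs2 hkr)
    have := hleft.union hright
    rwa [Iic_union_Ici, continuousWithinAt_univ] at this

end Aux

/-- Uniform convergence of the piecewise-linear Euler interpolant: if `p` is
a C² solution of `ẋ = e(x)` with `p(0) = x₀` and `e` is Lipschitz with
constant `L`, then for every `ε > 0` there is `h₀ > 0` such that for all
`0 < h < h₀` and all `t ∈ [0, T]`, `‖p(t) − f_h(t)‖ < ε`. -/
theorem euler_interp_uniform_convergence {n : ℕ}
    (e : EuclideanSpace ℝ (Fin n) → EuclideanSpace ℝ (Fin n))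
    (p : ℝ → EuclideanSpace ℝ (Fin n)) (x0 : EuclideanSpace ℝ (Fin n))
    (T L : ℝ) (hT : 0 < T) (hL : 0 < L)
    (hLip : LipschitzWith (Real.toNNReal L) e)
    (hp0 : p 0 = x0)
    (hsol : ∀ t ∈ Icc (0:ℝ) T, HasDerivAt p (e (p t)) t)
    (hC2 : ContDiff ℝ 2 p) :
    ∀ ε > (0:ℝ), ∃ h₀ > (0:ℝ), ∀ h, 0 < h → h < h₀ →
      ∀ t ∈ Icc (0:ℝ) T, ‖p t - eulerInterp e x0 h t‖ < ε := by
  intro ε hε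
  set B : ℝ := Real.exp (L * T) * (‖e x0‖ + 1) with hB
  have hBpos : 0 < B := by positivity
  refine ⟨ε / (B * Real.exp (L * T)), div_pos hε (by positivity), ?_⟩
  intro h hh hhε t htT
  set g : ℝ → EuclideanSpace ℝ (Fin n) := eulerInterp e x0 h with hg
  have hLe : ∀ a b : EuclideanSpace ℝ (Fin n), ‖e a - e b‖ ≤ L * ‖a - b‖ := by
    intro a b
    have := hLip.dist_le_mul a b
    rwa [dist_eq_norm, dist_eq_norm, Real.coe_toNNReal _ hL.le] at this
  -- continuity
  have hcont : ContinuousOn (fun s => p s - g s) (Icc 0 T) :=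
    (hC2.continuous.sub (eulerInterp_continuous e x0 h hh)).continuousOn
  -- right derivatives
  have hderiv : ∀ s ∈ Ico (0:ℝ) T,
      HasDerivWithinAt (fun s => p s - g s)
        (e (p s) - e (euler e x0 h ⌊s / h⌋₊)) (Ici s) s := by
    intro s hs
    have hp := (hsol s (Ico_subset_Icc_self hs)).hasDerivWithinAt (s := Ici s)
    set i : ℕ := ⌊s / h⌋₊ with hi
    have hil : (i:ℝ)*h ≤ s := by
      rw [← le_div_iff₀ hh]; exact Nat.floor_le (div_nonneg hs.1 hh.le)
    have hir : s < ((i:ℝ)+1)*h := by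
      rw [← div_lt_iff₀ hh]; exact_mod_cast Nat.lt_floor_add_one (s/h)
    have hgd : HasDerivWithinAt g (e (euler e x0 h i)) (Ici s) s := by
      refine ((hasDerivAt_affine e x0 h hh i s).hasDerivWithinAt).congr_of_eventuallyEq ?_
        (eulerInterp_eq_affine e x0 h hh i hil hir.le)
      filter_upwards [nhdsWithin_le_nhds (Iio_mem_nhds hir), self_mem_nhdsWithin] with u hu1 hu2
      exact eulerInterp_eq_affine e x0 h hh i (le_trans hil hu2) (le_of_lt hu1)
    exact hp.sub hgd
  -- initial value
  have hinit : ‖p 0 - g 0‖ ≤ 0 := by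
    have hg0 : g 0 = x0 := by
      simp [hg, eulerInterp, Nat.floor_eq_zero.2 (by norm_num : (0:ℝ)/h < 1), euler]
    rw [hg0, hp0, sub_self, norm_zero]
  -- the derivative bound
  have hbound : ∀ s ∈ Ico (0:ℝ) T,
      ‖e (p s) - e (euler e x0 h ⌊s / h⌋₊)‖ ≤ L * ‖p s - g s‖ + L * (h * B) := by
    intro s hs
    set i : ℕ := ⌊s / h⌋₊ with hi
    have hil : (i:ℝ)*h ≤ s := by
      rw [← le_div_iff₀ hh]; exact Nat.floor_le (div_nonneg hs.1 hh.le)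
    have hir : s < ((i:ℝ)+1)*h := by
      rw [← div_lt_iff₀ hh]; exact_mod_cast Nat.lt_floor_add_one (s/h)
    have hgx : g s - euler e x0 h i =
        ((s - (i:ℝ)*h)/h) • (euler e x0 h (i+1) - euler e x0 h i) := by
      rw [hg, eulerInterp_eq_affine e x0 h hh i hil hir.le, add_sub_cancel_left]
    have hv : euler e x0 h (i+1) - euler e x0 h i = h • e (euler e x0 h i) := by simp [euler]
    have hnorm1 : ‖g s - euler e x0 h i‖ ≤ h * ‖e (euler e x0 h i)‖ := by
      rw [hgx, hv, norm_smul, norm_smul, Real.norm_eq_abs, Real.norm_eq_abs,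
        abs_of_pos hh, abs_of_nonneg (div_nonneg (by linarith) hh.le)]
      rw [← mul_assoc]
      have hle1 : (s - (i:ℝ)*h)/h ≤ 1 := by
        rw [div_le_one hh]; linarith
      have hch : (s - (i:ℝ)*h)/h * h ≤ h := by nlinarith
      exact mul_le_mul_of_nonneg_right hch (norm_nonneg _)
    have hnorm2 : ‖e (euler e x0 h i)‖ ≤ B := by
      refine (norm_e_euler_le e x0 h L hh hL hLip i).trans ?_
      have hih : (i:ℝ) * h ≤ T := le_trans hil (le_of_lt hs.2)
      calc Real.exp (L * ((i:ℝ) * h)) * ‖e x0‖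
          ≤ Real.exp (L * T) * ‖e x0‖ := by
            apply mul_le_mul_of_nonneg_right _ (norm_nonneg _)
            exact Real.exp_le_exp.2 (mul_le_mul_of_nonneg_left hih hL.le)
        _ ≤ B := by
            rw [hB]
            have := Real.exp_pos (L*T)
            nlinarith [norm_nonneg (e x0)]
    calc ‖e (p s) - e (euler e x0 h i)‖
        ≤ ‖e (p s) - e (g s)‖ + ‖e (g s) - e (euler e x0 h i)‖ := by
          have := norm_sub_le_norm_sub_add_norm_sub (e (p s)) (e (g s)) (e (euler e x0 h i))
          exact this
      _ ≤ L * ‖p s - g s‖ + L * ‖g s - euler e x0 h i‖ :=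
          add_le_add (hLe _ _) (hLe _ _)
      _ ≤ L * ‖p s - g s‖ + L * (h * B) := by
          have : ‖g s - euler e x0 h i‖ ≤ h * B := by
            refine hnorm1.trans ?_
            exact mul_le_mul_of_nonneg_left hnorm2 hh.le
          nlinarith
  -- Grönwall
  have key := norm_le_gronwallBound_of_norm_deriv_right_le hcont hderiv hinit hbound t htT
  have hgb : gronwallBound 0 L (L * (h * B)) (t - 0) = h * B * (Real.exp (L * t) - 1) := by
    rw [gronwallBound_of_K_ne_0 hL.ne']
    rw [sub_zero]
    field_simp
    ring
  rw [hgb] at key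
  have h1 : h * B * (Real.exp (L * t) - 1) < h * (B * Real.exp (L * T)) := by
    have hmono : Real.exp (L * t) ≤ Real.exp (L * T) :=
      Real.exp_le_exp.2 (mul_le_mul_of_nonneg_left htT.2 hL.le)
    have hpos := Real.exp_pos (L * t)
    nlinarith [mul_pos hh hBpos]
  have h2 : h * (B * Real.exp (L * T)) < ε := by
    rw [lt_div_iff₀ (mul_pos hBpos (Real.exp_pos _))] at hhε
    linarith
  exact lt_of_le_of_lt key (lt_trans h1 h2)
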